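/- Let d ≥ 1 and let μ be a positively associated probability measure on {0,1}^{ℤ^d}. Suppose there are constants c₀ > 0 and C₀ < ∞ such that for every z ∈ ℤ^d, every integer r ≥ 1 and all x, y ∈ B_r(z), μ({ω : x is connected to y by an ω-open path inside B_{2r}(z)}) ≥ c₀·r^{−C₀}. Then there exists C₁ < ∞, depending only on d, c₀ and C₀, such that for every integer r ≥ 2 and all x, y ∈ B_r, μ({ω : x is connected to y by an ω-open path inside B_r}) ≥ exp(−C₁ (log r)²). -/

import Mathlib

open MeasureTheory

/-- Nearest-neighbor adjacency on `ℤ^d`: Euclidean distance one. -/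
def nnAdj {d : ℕ} (x y : Fin d → ℤ) : Prop := ∑ i, (x i - y i) ^ 2 = 1

/-- The box `B_r(z) = z + ([-r,r] ∩ ℤ)^d`. -/
def latBoxAt {d : ℕ} (z : Fin d → ℤ) (r : ℕ) : Set (Fin d → ℤ) :=
  {x | ∀ i, |x i - z i| ≤ (r : ℤ)}

/-- The set of `ω`-open sites. -/
def openSites {d : ℕ} (ω : (Fin d → ℤ) → Bool) : Set (Fin d → ℤ) := {x | ω x = true}

/-- `x` and `y` are joined by a nearest-neighbor path lying in `A`. -/
def LatJoined {d : ℕ} (A : Set (Fin d → ℤ)) (x y : Fin d → ℤ) : Prop :=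
  ∃ l : List (Fin d → ℤ), l.Chain' nnAdj ∧ l.head? = some x ∧ l.getLast? = some y ∧
    ∀ z ∈ l, z ∈ A

/-- The event that `x` is connected to `y` by an `ω`-open path inside `A`. -/
def connEvent {d : ℕ} (A : Set (Fin d → ℤ)) (x y : Fin d → ℤ) :
    Set ((Fin d → ℤ) → Bool) :=
  {ω | LatJoined (A ∩ openSites ω) x y}

/-- Positive association: `μ(E ∩ F) ≥ μ(E)μ(F)` for increasing events `E`, `F`. -/
def PosAssoc {d : ℕ} (μ : Measure ((Fin d → ℤ) → Bool)) : Prop :=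
  ∀ E F : Set ((Fin d → ℤ) → Bool), MeasurableSet E → MeasurableSet F →
    (∀ ω ω' : (Fin d → ℤ) → Bool, (∀ x, ω x ≤ ω' x) → ω ∈ E → ω' ∈ E) →
    (∀ ω ω' : (Fin d → ℤ) → Bool, (∀ x, ω x ≤ ω' x) → ω ∈ F → ω' ∈ F) →
    μ E * μ F ≤ μ (E ∩ F)

lemma nnAdj_symm {d : ℕ} {x y : Fin d → ℤ} (h : nnAdj x y) : nnAdj y x := by
  unfold nnAdj at *; rw [← h]; congr 1; funext i; ring

lemma LatJoined.mono {d : ℕ} {A A' : Set (Fin d → ℤ)} (hA : A ⊆ A') {x y : Fin d → ℤ}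
    (h : LatJoined A x y) : LatJoined A' x y := by
  obtain ⟨l, h1, h2, h3, h4⟩ := h
  exact ⟨l, h1, h2, h3, fun z hz => hA (h4 z hz)⟩

lemma LatJoined.symm {d : ℕ} {A : Set (Fin d → ℤ)} {x y : Fin d → ℤ}
    (h : LatJoined A x y) : LatJoined A y x := by
  obtain ⟨l, h1, h2, h3, h4⟩ := h
  refine ⟨l.reverse, ?_, ?_, ?_, ?_⟩
  · rw [List.Chain', List.isChain_reverse]
    exact h1.imp (fun a b hab => nnAdj_symm hab)
  · rw [List.head?_reverse]; exact h3
  · rw [List.getLast?_reverse]; exact h2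
  · intro z hz; exact h4 z (List.mem_reverse.mp hz)

lemma LatJoined.trans {d : ℕ} {A : Set (Fin d → ℤ)} {x y z : Fin d → ℤ}
    (h : LatJoined A x y) (h' : LatJoined A y z) : LatJoined A x z := by
  obtain ⟨l, h1, h2, h3, h4⟩ := h
  obtain ⟨m, g1, g2, g3, g4⟩ := h'
  match m, g2 with
  | b :: t, g2 =>
    have hby : b = y := by simpa using g2
    subst hby
    match t, g3 with
    | [], g3 =>
      have : b = z := by simpa using g3
      exact ⟨l, h1, h2, this ▸ h3, h4⟩
    | u :: t', g3 =>
      refine ⟨l ++ (u :: t'), ?_, ?_, ?_, ?_⟩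
      · rw [List.Chain', List.isChain_append]
        refine ⟨h1, (List.isChain_cons_cons.mp g1).2, ?_⟩
        intro a ha c hc
        rw [h3] at ha
        simp at ha hc
        subst ha; subst hc
        exact (List.isChain_cons_cons.mp g1).1
      · rcases l with _ | ⟨a, l'⟩
        · simp at h2
        · simpa using h2
      · rw [List.getLast?_append]
        simp
        rw [← g3]; simp [List.getLast?_cons_cons]
      · intro w hw
        rcases List.mem_append.mp hw with hw | hw
        · exact h4 w hw
        · exact g4 w (by simp [hw])

lemma connEvent_eq_iUnion {d : ℕ} (A : Set (Fin d → ℤ)) (x y : Fin d → ℤ) :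
    connEvent A x y = ⋃ l ∈ {l : List (Fin d → ℤ) |
        l.Chain' nnAdj ∧ l.head? = some x ∧ l.getLast? = some y ∧ ∀ z ∈ l, z ∈ A},
      {ω : (Fin d → ℤ) → Bool | ∀ z ∈ l, ω z = true} := by
  ext ω
  simp only [Set.mem_iUnion, Set.mem_setOf_eq, exists_prop]
  constructor
  · rintro ⟨l, h1, h2, h3, h4⟩
    exact ⟨l, ⟨h1, h2, h3, fun z hz => (h4 z hz).1⟩, fun z hz => (h4 z hz).2⟩
  · rintro ⟨l, ⟨h1, h2, h3, h4⟩, h5⟩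
    exact ⟨l, h1, h2, h3, fun z hz => ⟨h4 z hz, h5 z hz⟩⟩

lemma measurableSet_connEvent {d : ℕ} (A : Set (Fin d → ℤ)) (x y : Fin d → ℤ) :
    MeasurableSet (connEvent A x y) := by
  rw [connEvent_eq_iUnion]
  refine MeasurableSet.biUnion (Set.to_countable _) (fun l _ => ?_)
  have : {ω : (Fin d → ℤ) → Bool | ∀ z ∈ l, ω z = true}
      = ⋂ z ∈ l, {ω : (Fin d → ℤ) → Bool | ω z = true} := by
    ext ω; simp
  rw [this]
  refine MeasurableSet.biInter (Set.to_countable _) (fun z _ => ?_)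
  have : {ω : (Fin d → ℤ) → Bool | ω z = true} = (fun ω => ω z) ⁻¹' {true} := rfl
  rw [this]
  exact (measurable_pi_apply z) (MeasurableSet.singleton true)

lemma connEvent_incr {d : ℕ} (A : Set (Fin d → ℤ)) (x y : Fin d → ℤ)
    (ω ω' : (Fin d → ℤ) → Bool) (h : ∀ x, ω x ≤ ω' x) (hω : ω ∈ connEvent A x y) :
    ω' ∈ connEvent A x y := by
  obtain ⟨l, h1, h2, h3, h4⟩ := hω
  refine ⟨l, h1, h2, h3, fun z hz => ⟨(h4 z hz).1, ?_⟩⟩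
  have := (h4 z hz).2
  have hz2 := h z
  simp only [openSites, Set.mem_setOf_eq] at this ⊢
  rw [this] at hz2
  exact le_antisymm (by simp) hz2
lemma connEvent_mono {d : ℕ} {A A' : Set (Fin d → ℤ)} (h : A ⊆ A') (x y : Fin d → ℤ) :
    connEvent A x y ⊆ connEvent A' x y := fun ω hω =>
  LatJoined.mono (Set.inter_subset_inter_left _ h) hω

lemma connEvent_open_left {d : ℕ} {A : Set (Fin d → ℤ)} {x y : Fin d → ℤ}
    {ω : (Fin d → ℤ) → Bool} (h : ω ∈ connEvent A x y) : ω x = true := by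
  obtain ⟨l, h1, h2, h3, h4⟩ := h
  have hx : x ∈ l := by
    rcases l with _ | ⟨a, t⟩
    · simp at h2
    · simp at h2; subst h2; simp
  exact (h4 x hx).2

lemma connEvent_single {d : ℕ} {A : Set (Fin d → ℤ)} {x : Fin d → ℤ} (hx : x ∈ A)
    {ω : (Fin d → ℤ) → Bool} (hω : ω x = true) : ω ∈ connEvent A x x :=
  ⟨[x], List.isChain_singleton _, by simp, by simp, by simpa using ⟨hx, hω⟩⟩

lemma connEvent_pair {d : ℕ} {A : Set (Fin d → ℤ)} {x y : Fin d → ℤ} (hx : x ∈ A)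
    (hy : y ∈ A) (hadj : nnAdj x y) {ω : (Fin d → ℤ) → Bool}
    (hωx : ω x = true) (hωy : ω y = true) : ω ∈ connEvent A x y :=
  ⟨[x, y], List.isChain_pair.mpr hadj, by simp, by simp, by
    intro z hz; simp at hz
    rcases hz with h | h <;> subst h
    · exact ⟨hx, hωx⟩
    · exact ⟨hy, hωy⟩⟩

lemma connEvent_trans {d : ℕ} {A : Set (Fin d → ℤ)} {x y z : Fin d → ℤ}
    {ω : (Fin d → ℤ) → Bool} (h : ω ∈ connEvent A x y) (h' : ω ∈ connEvent A y z) :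
    ω ∈ connEvent A x z := LatJoined.trans h h'

lemma connEvent_symm {d : ℕ} {A : Set (Fin d → ℤ)} {x y : Fin d → ℤ}
    {ω : (Fin d → ℤ) → Bool} (h : ω ∈ connEvent A x y) : ω ∈ connEvent A y x :=
  LatJoined.symm h

lemma glue {d : ℕ} {μ : Measure ((Fin d → ℤ) → Bool)} (hpa : PosAssoc μ)
    {B : Set (Fin d → ℤ)} {x y z : Fin d → ℤ} :
    μ (connEvent B x y) * μ (connEvent B y z) ≤ μ (connEvent B x z) := by
  refine le_trans (hpa _ _ (measurableSet_connEvent B x y) (measurableSet_connEvent B y z)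
    (connEvent_incr B x y) (connEvent_incr B y z)) (measure_mono ?_)
  rintro ω ⟨h1, h2⟩
  exact connEvent_trans h1 h2

lemma posassoc_inter {d : ℕ} {μ : Measure ((Fin d → ℤ) → Bool)} (hpa : PosAssoc μ)
    {A B : Set (Fin d → ℤ)} {x y x' y' : Fin d → ℤ} :
    μ (connEvent A x y) * μ (connEvent B x' y') ≤ μ (connEvent A x y ∩ connEvent B x' y') :=
  hpa _ _ (measurableSet_connEvent A x y) (measurableSet_connEvent B x' y')
    (connEvent_incr A x y) (connEvent_incr B x' y')
def clampZ (t a : ℤ) : ℤ := max (-t) (min t a)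

lemma clampZ_abs_le {t a : ℤ} (ht : 0 ≤ t) : |clampZ t a| ≤ t := by
  rw [abs_le]; unfold clampZ; omega

lemma clampZ_eq_self {t a : ℤ} (h : |a| ≤ t) : clampZ t a = a := by
  rw [abs_le] at h; unfold clampZ; omega

lemma clampZ_dist {t t' a : ℤ} (h0 : 0 ≤ t') (h : t' ≤ t) :
    |clampZ t a - clampZ t' a| ≤ t - t' := by
  rw [abs_le]; unfold clampZ; omega

lemma clampZ_dist_self {t a : ℤ} (h0 : 0 ≤ t) (h : |a| ≤ t + 1) :
    |a - clampZ t a| ≤ 1 := by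
  rw [abs_le] at *; unfold clampZ; omega

lemma mem_latBoxAt {d : ℕ} {z x : Fin d → ℤ} {r : ℕ} :
    x ∈ latBoxAt z r ↔ ∀ i, |x i - z i| ≤ (r : ℤ) := Iff.rfl

lemma latBoxAt_subset {d : ℕ} {z : Fin d → ℤ} {s r : ℕ}
    (h : ∀ i, |z i| + (s : ℤ) ≤ (r : ℤ)) :
    latBoxAt z s ⊆ latBoxAt (0 : Fin d → ℤ) r := by
  intro x hx i
  have h1 := hx i
  have h2 := h i
  simp only [Pi.zero_apply, sub_zero]
  have : |x i| ≤ |x i - z i| + |z i| := by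
    calc |x i| = |(x i - z i) + z i| := by ring_nf
    _ ≤ _ := abs_add_le _ _
  omega
section Steps
variable {d : ℕ} {μ : Measure ((Fin d → ℤ) → Bool)} {c₀ C₀ : ℝ}

lemma single_site
    (hyp : ∀ z : Fin d → ℤ, ∀ r : ℕ, 1 ≤ r →
      ∀ x y : Fin d → ℤ, x ∈ latBoxAt z r → y ∈ latBoxAt z r →
        ENNReal.ofReal (c₀ * (r : ℝ) ^ (-C₀)) ≤ μ (connEvent (latBoxAt z (2 * r)) x y))
    (v : Fin d → ℤ) :
    ENNReal.ofReal c₀ ≤ μ (connEvent (latBoxAt v 2) v v) := by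
  have h := hyp v 1 le_rfl v v (by intro i; simp) (by intro i; simp)
  simpa [Real.one_rpow] using h

lemma step_bound (hpa : PosAssoc μ)
    (hyp : ∀ z : Fin d → ℤ, ∀ r : ℕ, 1 ≤ r →
      ∀ x y : Fin d → ℤ, x ∈ latBoxAt z r → y ∈ latBoxAt z r →
        ENNReal.ofReal (c₀ * (r : ℝ) ^ (-C₀)) ≤ μ (connEvent (latBoxAt z (2 * r)) x y))
    (hc1 : ENNReal.ofReal c₀ ≤ 1)
    {B : Set (Fin d → ℤ)} {v w : Fin d → ℤ} (hv : v ∈ B) (hw : w ∈ B)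
    (h : v = w ∨ nnAdj v w) :
    ENNReal.ofReal c₀ ^ 2 ≤ μ (connEvent B v w) := by
  rcases h with h | h
  · subst h
    calc ENNReal.ofReal c₀ ^ 2 ≤ ENNReal.ofReal c₀ ^ 1 :=
          pow_le_pow_of_le_one (by positivity) hc1 (by norm_num)
    _ = ENNReal.ofReal c₀ := pow_one _
    _ ≤ μ (connEvent (latBoxAt v 2) v v) := single_site hyp v
    _ ≤ μ (connEvent B v v) := measure_mono
          (fun ω hω => connEvent_single hv (connEvent_open_left hω))
  · calc ENNReal.ofReal c₀ ^ 2 = ENNReal.ofReal c₀ * ENNReal.ofReal c₀ := sq _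
    _ ≤ μ (connEvent (latBoxAt v 2) v v) * μ (connEvent (latBoxAt w 2) w w) :=
        mul_le_mul' (single_site hyp v) (single_site hyp w)
    _ ≤ μ (connEvent (latBoxAt v 2) v v ∩ connEvent (latBoxAt w 2) w w) :=
        posassoc_inter hpa
    _ ≤ μ (connEvent B v w) := measure_mono (by
        rintro ω ⟨h1, h2⟩
        exact connEvent_pair hv hw h (connEvent_open_left h1) (connEvent_open_left h2))
end Steps
def wSeq {d : ℕ} (r : ℕ) (x : Fin d → ℤ) (j : ℕ) : Fin d → ℤ :=
  fun i => if (i : ℕ) < j then clampZ ((r : ℤ) - 1) (x i) else x i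

def pSeq {d : ℕ} (r : ℕ) (x : Fin d → ℤ) (k : ℕ) : Fin d → ℤ :=
  fun i => clampZ (max 0 ((r : ℤ) - 2 ^ k)) (x i)

section Geom
variable {d : ℕ} {r : ℕ} {x : Fin d → ℤ}

lemma wSeq_zero : wSeq r x 0 = x := funext fun i => by simp [wSeq]

lemma wSeq_d (hr : 1 ≤ r) : wSeq r x d = pSeq r x 0 := by
  funext i
  have h1 : (1 : ℤ) ≤ (r : ℤ) := by exact_mod_cast hr
  simp only [wSeq, pSeq, i.isLt, if_true]
  congr 1
  simp; omega

lemma wSeq_mem (hr : 1 ≤ r) (hx : x ∈ latBoxAt 0 r) (j : ℕ) :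
    wSeq r x j ∈ latBoxAt 0 r := by
  intro i
  have h1 : (1 : ℤ) ≤ (r : ℤ) := by exact_mod_cast hr
  simp only [wSeq, Pi.zero_apply, sub_zero]
  split
  · have := clampZ_abs_le (t := (r : ℤ) - 1) (a := x i) (by omega)
    omega
  · simpa using hx i

lemma wSeq_step (hr : 1 ≤ r) (hx : x ∈ latBoxAt 0 r) (j : ℕ) :
    wSeq r x j = wSeq r x (j + 1) ∨ nnAdj (wSeq r x j) (wSeq r x (j + 1)) := by
  have h1 : (1 : ℤ) ≤ (r : ℤ) := by exact_mod_cast hr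
  by_cases hj : j < d
  · set i0 : Fin d := ⟨j, hj⟩ with hi0
    by_cases he : clampZ ((r : ℤ) - 1) (x i0) = x i0
    · left
      funext i
      simp only [wSeq]
      by_cases hlt : (i : ℕ) < j
      · simp [hlt, Nat.lt_succ_of_lt hlt]
      · by_cases hlt2 : (i : ℕ) < j + 1
        · have : i = i0 := Fin.ext (show (i:ℕ) = j by omega)
          subst this
          simp [hlt, hlt2, he]
        · simp [hlt, hlt2]
    · right
      unfold nnAdj
      have key : ∀ i : Fin d, i ≠ i0 →
          (wSeq r x j i - wSeq r x (j + 1) i) ^ 2 = 0 := by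
        intro i hi
        have hij : (i : ℕ) ≠ j := fun h => hi (Fin.ext h)
        simp only [wSeq]
        by_cases hlt : (i : ℕ) < j
        · simp [hlt, Nat.lt_succ_of_lt hlt]
        · have : ¬ (i : ℕ) < j + 1 := by omega
          simp [hlt, this]
      rw [Finset.sum_eq_single i0 (fun i _ hi => key i hi) (by simp)]
      have hx0 : |x i0| ≤ (r : ℤ) := by simpa using hx i0
      have habs : |x i0 - clampZ ((r : ℤ) - 1) (x i0)| ≤ 1 :=
        clampZ_dist_self (by omega) (by omega)
      have hne : x i0 - clampZ ((r : ℤ) - 1) (x i0) ≠ 0 := by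
        intro h; exact he (by omega)
      have hd : x i0 - clampZ ((r : ℤ) - 1) (x i0) = 1 ∨
          x i0 - clampZ ((r : ℤ) - 1) (x i0) = -1 := by
        rw [abs_le] at habs; omega
      have hwj : wSeq r x j i0 = x i0 := by simp [wSeq, hi0]
      have hwj1 : wSeq r x (j + 1) i0 = clampZ ((r : ℤ) - 1) (x i0) := by
        simp [wSeq, hi0]
      rw [hwj, hwj1]
      rcases hd with h | h <;> rw [show x i0 - clampZ ((r:ℤ)-1) (x i0) = _ from h] <;> norm_num
  · left
    funext i
    have hlt : (i : ℕ) < j := lt_of_lt_of_le i.isLt (le_of_not_gt hj)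
    simp [wSeq, hlt, Nat.lt_succ_of_lt hlt]

lemma pSeq_mem (hx : x ∈ latBoxAt 0 r) (k : ℕ) : pSeq r x k ∈ latBoxAt 0 r := by
  intro i
  have h0 : (0 : ℤ) ≤ (r : ℤ) := by positivity
  have := clampZ_abs_le (t := max 0 ((r : ℤ) - 2 ^ k)) (a := x i) (le_max_left _ _)
  simp only [pSeq, Pi.zero_apply, sub_zero]
  have h2 : (0:ℤ) < 2 ^ k := by positivity
  omega

lemma pSeq_in_box (k : ℕ) : pSeq r x k ∈ latBoxAt (pSeq r x (k + 1)) (2 ^ k) := by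
  intro i
  have hcast : ((2 ^ k : ℕ) : ℤ) = 2 ^ k := by push_cast; ring
  rw [hcast]
  have hp : (2 : ℤ) ^ (k + 1) = 2 * 2 ^ k := by ring
  have h2 : (0:ℤ) < 2 ^ k := by positivity
  have := clampZ_dist (t := max 0 ((r : ℤ) - 2 ^ k)) (t' := max 0 ((r : ℤ) - 2 ^ (k+1)))
    (a := x i) (le_max_left _ _) (by omega)
  simp only [pSeq]
  omega

lemma pSeq_box_subset (hk : 2 ^ (k + 1) ≤ r) :
    latBoxAt (pSeq r x (k + 1)) (2 * 2 ^ k) ⊆ latBoxAt (0 : Fin d → ℤ) r := by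
  apply latBoxAt_subset
  intro i
  have hcast : ((2 * 2 ^ k : ℕ) : ℤ) = 2 ^ (k + 1) := by push_cast; ring
  rw [hcast]
  have hkr : (2 : ℤ) ^ (k + 1) ≤ (r : ℤ) := by exact_mod_cast hk
  have := clampZ_abs_le (t := max 0 ((r : ℤ) - 2 ^ (k+1))) (a := x i) (le_max_left _ _)
  simp only [pSeq]
  omega

lemma pSeq_final (hK1 : 2 ^ k ≤ r) (hK2 : r < 2 ^ (k + 1)) :
    pSeq r x k ∈ latBoxAt (0 : Fin d → ℤ) (r / 2) := by
  intro i
  have hdiv : (2 : ℕ) * (r / 2) + 2 ≥ r + 1 := by omega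
  have hc1 : (2 : ℤ) ^ k = ((2 ^ k : ℕ) : ℤ) := by push_cast; ring
  have hK1' : (2:ℤ) ^ k ≤ (r:ℤ) := by rw [hc1]; exact_mod_cast hK1
  have hK2' : (r:ℤ) < 2 * 2 ^ k := by
    have : (r:ℕ) < 2 * 2 ^ k := by rw [pow_succ] at hK2; omega
    rw [hc1]; exact_mod_cast this
  have hd2 : ((r / 2 : ℕ) : ℤ) * 2 + 2 ≥ (r:ℤ) + 1 := by exact_mod_cast (by omega : (r/2) * 2 + 2 ≥ r + 1)
  have := clampZ_abs_le (t := max 0 ((r : ℤ) - 2 ^ k)) (a := x i) (le_max_left _ _)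
  simp only [pSeq, Pi.zero_apply, sub_zero]
  omega
end Geom
lemma eps_le_scale {c₀ C₀ : ℝ} (hc₀ : 0 < c₀) {s r : ℕ} (hs : 1 ≤ s) (hsr : s ≤ r) :
    c₀ * (r : ℝ) ^ (-|C₀|) ≤ c₀ * (s : ℝ) ^ (-C₀) := by
  have h1 : (1 : ℝ) ≤ (s : ℝ) := by exact_mod_cast hs
  have h2 : (s : ℝ) ≤ (r : ℝ) := by exact_mod_cast hsr
  have a : (r : ℝ) ^ (-|C₀|) ≤ (s : ℝ) ^ (-|C₀|) :=
    Real.rpow_le_rpow_of_nonpos (by linarith) h2 (neg_nonpos.mpr (abs_nonneg _))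
  have b : (s : ℝ) ^ (-|C₀|) ≤ (s : ℝ) ^ (-C₀) :=
    Real.rpow_le_rpow_of_exponent_le h1 (neg_le_neg (le_abs_self _))
  exact mul_le_mul_of_nonneg_left (a.trans b) hc₀.le

lemma connect_to_zero {d : ℕ} {μ : Measure ((Fin d → ℤ) → Bool)} [IsProbabilityMeasure μ]
    (hpa : PosAssoc μ) {c₀ C₀ : ℝ} (hc₀ : 0 < c₀)
    (hyp : ∀ z : Fin d → ℤ, ∀ r : ℕ, 1 ≤ r →
      ∀ x y : Fin d → ℤ, x ∈ latBoxAt z r → y ∈ latBoxAt z r →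
        ENNReal.ofReal (c₀ * (r : ℝ) ^ (-C₀)) ≤ μ (connEvent (latBoxAt z (2 * r)) x y))
    {r : ℕ} (hr : 2 ≤ r) {x : Fin d → ℤ} (hx : x ∈ latBoxAt 0 r) :
    ENNReal.ofReal (c₀ * (r : ℝ) ^ (-|C₀|)) ^ (2 * d + Nat.log 2 r + 3) ≤
      μ (connEvent (latBoxAt 0 r) x 0) := by
  set ε := ENNReal.ofReal (c₀ * (r : ℝ) ^ (-|C₀|)) with hε
  have hr1 : 1 ≤ r := by omega
  have hεc : ε ≤ ENNReal.ofReal c₀ := by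
    apply ENNReal.ofReal_le_ofReal
    have := eps_le_scale (C₀ := C₀) hc₀ (le_refl 1) hr1
    simpa [Real.one_rpow] using this
  have hc1 : ENNReal.ofReal c₀ ≤ 1 := le_trans (single_site hyp 0) prob_le_one
  have hε1 : ε ≤ 1 := hεc.trans hc1
  have hε2 : ∀ n : ℕ, ε ^ n ≤ ENNReal.ofReal c₀ ^ n := fun n => pow_le_pow_left' hεc n
  have claim1 : ∀ j : ℕ, ε ^ (2 * j + 2) ≤ μ (connEvent (latBoxAt 0 r) x (wSeq r x j)) := by
    intro j
    induction j with
    | zero =>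
      rw [wSeq_zero]
      calc ε ^ (2 * 0 + 2) = ε ^ 2 := by norm_num
        _ ≤ ENNReal.ofReal c₀ ^ 2 := hε2 2
        _ ≤ μ (connEvent (latBoxAt 0 r) x x) := step_bound hpa hyp hc1 hx hx (Or.inl rfl)
    | succ j ih =>
      have hstep : ε ^ 2 ≤ μ (connEvent (latBoxAt 0 r) (wSeq r x j) (wSeq r x (j + 1))) :=
        le_trans (hε2 2)
          (step_bound hpa hyp hc1 (wSeq_mem hr1 hx j) (wSeq_mem hr1 hx (j + 1))
            (wSeq_step hr1 hx j))
      calc ε ^ (2 * (j + 1) + 2) = ε ^ (2 * j + 2) * ε ^ 2 := by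
            rw [← pow_add]; ring_nf
        _ ≤ μ (connEvent (latBoxAt 0 r) x (wSeq r x j)) *
            μ (connEvent (latBoxAt 0 r) (wSeq r x j) (wSeq r x (j + 1))) :=
            mul_le_mul' ih hstep
        _ ≤ _ := glue hpa
  have hK1 : 2 ^ Nat.log 2 r ≤ r := Nat.pow_log_le_self 2 (by omega)
  have hK2 : r < 2 ^ (Nat.log 2 r + 1) := Nat.lt_pow_succ_log_self (by norm_num) r
  have claim2 : ∀ k, k ≤ Nat.log 2 r →
      ε ^ (2 * d + 2 + k) ≤ μ (connEvent (latBoxAt 0 r) x (pSeq r x k)) := by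
    intro k
    induction k with
    | zero =>
      intro _
      have h := claim1 d
      rw [wSeq_d hr1] at h
      simpa using h
    | succ k ih =>
      intro hk
      have hk' : 2 ^ (k + 1) ≤ r := le_trans (Nat.pow_le_pow_right (by norm_num) hk) hK1
      have hstep : ε ≤ μ (connEvent (latBoxAt 0 r) (pSeq r x k) (pSeq r x (k + 1))) := by
        have hb := hyp (pSeq r x (k + 1)) (2 ^ k) Nat.one_le_two_pow
          (pSeq r x k) (pSeq r x (k + 1)) (pSeq_in_box k) (fun i => by simp)
        refine le_trans ?_ (le_trans hb
          (measure_mono (connEvent_mono (pSeq_box_subset hk') _ _)))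
        exact ENNReal.ofReal_le_ofReal (eps_le_scale hc₀ Nat.one_le_two_pow
          (le_trans (Nat.pow_le_pow_right (by norm_num) (Nat.le_succ k)) hk'))
      calc ε ^ (2 * d + 2 + (k + 1)) = ε ^ (2 * d + 2 + k) * ε := by
            rw [show 2 * d + 2 + (k + 1) = (2 * d + 2 + k) + 1 from rfl, pow_succ]
        _ ≤ μ (connEvent (latBoxAt 0 r) x (pSeq r x k)) *
            μ (connEvent (latBoxAt 0 r) (pSeq r x k) (pSeq r x (k + 1))) :=
            mul_le_mul' (ih (by omega)) hstep
        _ ≤ _ := glue hpa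
  have hfin : ε ≤ μ (connEvent (latBoxAt 0 r) (pSeq r x (Nat.log 2 r)) 0) := by
    have hhalf : 1 ≤ r / 2 := by omega
    have hb := hyp 0 (r / 2) hhalf (pSeq r x (Nat.log 2 r)) 0 (pSeq_final hK1 hK2)
      (fun i => by simp; positivity)
    have hsub : latBoxAt (0 : Fin d → ℤ) (2 * (r / 2)) ⊆ latBoxAt (0 : Fin d → ℤ) r := by
      apply latBoxAt_subset
      intro i
      simp only [Pi.zero_apply, abs_zero, zero_add]
      exact_mod_cast (by omega : 2 * (r / 2) ≤ r)
    refine le_trans (ENNReal.ofReal_le_ofReal (eps_le_scale hc₀ hhalf (by omega)))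
      (le_trans hb (measure_mono (connEvent_mono hsub _ _)))
  calc ε ^ (2 * d + Nat.log 2 r + 3) = ε ^ (2 * d + 2 + Nat.log 2 r) * ε := by
        rw [← pow_succ]; ring_nf
    _ ≤ μ (connEvent (latBoxAt 0 r) x (pSeq r x (Nat.log 2 r))) *
        μ (connEvent (latBoxAt 0 r) (pSeq r x (Nat.log 2 r)) 0) :=
        mul_le_mul' (claim2 _ le_rfl) hfin
    _ ≤ _ := glue hpa

lemma arith_aux (dd KK NN L l2 M a lc t : ℝ)
    (hl2 : 0 < l2) (ht : L = t * l2) (ht1 : 1 ≤ t) (hKt : KK ≤ t) (hKK : 0 ≤ KK)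
    (hM : M = a + |lc|) (ha : 0 ≤ a) (hdd : 0 ≤ dd) (hNN : NN = 4 * dd + 2 * KK + 6)
    (hNN0 : 0 ≤ NN) :
    -((4 * dd + 8) / l2 * M * (1 + 1 / l2)) * L ^ 2 ≤ NN * (lc - a * L) := by
  have hM0 : 0 ≤ M := by
    have := abs_nonneg lc; rw [hM]; linarith
  have hL0 : 0 ≤ L := by nlinarith
  have hrhs : (4 * dd + 8) / l2 * M * (1 + 1 / l2) * L ^ 2
      = ((4 * dd + 8) * t) * (M * (L + t)) := by
    rw [ht]; field_simp
  have h1 : NN ≤ (4 * dd + 8) * t := by nlinarith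
  have h2 : a * L - lc ≤ M * (L + 1) := by
    have hlc : -lc ≤ |lc| := neg_le_abs lc
    nlinarith [mul_nonneg (abs_nonneg lc) hL0]
  have h3 : M * (L + 1) ≤ M * (L + t) := by nlinarith
  have key : NN * (a * L - lc) ≤ (4 * dd + 8) / l2 * M * (1 + 1 / l2) * L ^ 2 := by
    rcases le_or_gt (a * L - lc) 0 with hc | hc
    · have hr0 : 0 ≤ ((4 * dd + 8) * t) * (M * (L + t)) := by
        apply mul_nonneg (by nlinarith) (mul_nonneg hM0 (by nlinarith))
      rw [hrhs]
      nlinarith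
    · rw [hrhs]
      exact mul_le_mul h1 (h2.trans h3) hc.le (by nlinarith)
  nlinarith [key]

/-- polynomial two-point lower bounds at all centers and scales upgrade to a
`exp(−C₁(log r)²)` lower bound for connections inside `B_r` itself. -/
theorem two_point_quasi_polynomial_lower_bound (d : ℕ) (hd : 1 ≤ d)
    (c₀ C₀ : ℝ) (hc₀ : 0 < c₀) :
    ∃ C₁ : ℝ,
      ∀ μ : Measure ((Fin d → ℤ) → Bool), IsProbabilityMeasure μ → PosAssoc μ →
        (∀ z : Fin d → ℤ, ∀ r : ℕ, 1 ≤ r →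
          ∀ x y : Fin d → ℤ, x ∈ latBoxAt z r → y ∈ latBoxAt z r →
            ENNReal.ofReal (c₀ * (r : ℝ) ^ (-C₀)) ≤ μ (connEvent (latBoxAt z (2 * r)) x y)) →
        ∀ r : ℕ, 2 ≤ r → ∀ x y : Fin d → ℤ, x ∈ latBoxAt 0 r → y ∈ latBoxAt 0 r →
          ENNReal.ofReal (Real.exp (-C₁ * Real.log r ^ 2)) ≤
            μ (connEvent (latBoxAt 0 r) x y) := by
  set l2 := Real.log 2 with hl2def
  have hl2 : 0 < l2 := Real.log_pos (by norm_num)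
  set M : ℝ := |C₀| + |Real.log c₀| with hM
  have hM0 : 0 ≤ M := by positivity
  refine ⟨(4 * d + 8) / l2 * M * (1 + 1 / l2), ?_⟩
  intro μ hprob hpa hyp r hr x y hx hy
  haveI := hprob
  set K := Nat.log 2 r with hKdef
  set ε := ENNReal.ofReal (c₀ * (r : ℝ) ^ (-|C₀|)) with hεdef
  have hxz : ε ^ (2 * d + K + 3) ≤ μ (connEvent (latBoxAt 0 r) x 0) :=
    connect_to_zero hpa hc₀ hyp hr hx
  have hyz : ε ^ (2 * d + K + 3) ≤ μ (connEvent (latBoxAt 0 r) (0 : Fin d → ℤ) y) := by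
    have h := connect_to_zero hpa hc₀ hyp hr hy
    have heq : connEvent (latBoxAt (0 : Fin d → ℤ) r) y 0
        = connEvent (latBoxAt (0 : Fin d → ℤ) r) (0 : Fin d → ℤ) y :=
      Set.ext fun ω => ⟨fun h => connEvent_symm h, fun h => connEvent_symm h⟩
    rwa [heq] at h
  have hchain : ε ^ (2 * (2 * d + K + 3)) ≤ μ (connEvent (latBoxAt 0 r) x y) := by
    calc ε ^ (2 * (2 * d + K + 3)) = ε ^ (2 * d + K + 3) * ε ^ (2 * d + K + 3) := by
          rw [← pow_add]; ring_nf
      _ ≤ μ (connEvent (latBoxAt 0 r) x 0) * μ (connEvent (latBoxAt 0 r) (0 : Fin d → ℤ) y) :=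
          mul_le_mul' hxz hyz
      _ ≤ _ := glue hpa
  refine le_trans ?_ hchain
  -- numeric part
  set N : ℕ := 2 * (2 * d + K + 3) with hNdef
  have hbase : (0 : ℝ) < c₀ * (r : ℝ) ^ (-|C₀|) := by
    have hr0 : (0:ℝ) < (r:ℝ) := by exact_mod_cast (by omega : 0 < r)
    exact mul_pos hc₀ (Real.rpow_pos_of_pos hr0 _)
  rw [hεdef, ← ENNReal.ofReal_pow hbase.le]
  apply ENNReal.ofReal_le_ofReal
  -- real inequality
  set L := Real.log r with hLdef
  have hr2 : (2 : ℝ) ≤ (r : ℝ) := by exact_mod_cast hr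
  have hrpos : (0 : ℝ) < (r : ℝ) := by linarith
  have hL2 : l2 ≤ L := Real.log_le_log (by norm_num) hr2
  have hL0 : 0 < L := lt_of_lt_of_le hl2 hL2
  have hKL : (K : ℝ) * l2 ≤ L := by
    have h1 : (2 : ℝ) ^ K ≤ (r : ℝ) := by
      exact_mod_cast Nat.pow_log_le_self 2 (by omega : r ≠ 0)
    have := Real.log_le_log (by positivity) h1
    rwa [Real.log_pow] at this
  have hlogbase : Real.log (c₀ * (r : ℝ) ^ (-|C₀|)) = Real.log c₀ - |C₀| * L := by
    rw [Real.log_mul (ne_of_gt hc₀) (ne_of_gt (by positivity)), Real.log_rpow hrpos]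
    ring
  have hpow : (c₀ * (r : ℝ) ^ (-|C₀|)) ^ N = Real.exp ((N : ℝ) * (Real.log c₀ - |C₀| * L)) := by
    rw [← hlogbase, ← Real.exp_log hbase, ← Real.exp_nat_mul]
    rw [Real.exp_log hbase]
  rw [hpow]
  apply Real.exp_le_exp.mpr
  -- final: -C₁ L^2 ≤ N (log c₀ - |C₀| L)
  have hNr : (N : ℝ) = 4 * (d:ℝ) + 2 * (K:ℝ) + 6 := by rw [hNdef]; push_cast; ring
  have ht : L = (L / l2) * l2 := by field_simp
  have ht1 : 1 ≤ L / l2 := (one_le_div hl2).mpr hL2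
  have htK : (K : ℝ) ≤ L / l2 := (le_div_iff₀ hl2).mpr hKL
  have harith := arith_aux (d:ℝ) (K:ℝ) (N:ℝ) L l2 M |C₀| (Real.log c₀) (L / l2)
    hl2 ht ht1 htK (Nat.cast_nonneg _) hM (abs_nonneg _) (Nat.cast_nonneg _) hNr
    (Nat.cast_nonneg _)
  linarith [harith]
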